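/- Euler's reflection identity: for z ∈ (0,1), Li₂(z) + Li₂(1−z) = π²/6 − log(z)·log(1−z). -/

import Mathlib

open Real Filter Set Topology

/-- The real dilogarithm on `(0,1)`, defined by its power series. -/
noncomputable def Li2R (x : ℝ) : ℝ := ∑' n : ℕ, x ^ (n + 1) / ((n : ℝ) + 1) ^ 2

lemma Li2R_zero : Li2R 0 = 0 := by
  unfold Li2R
  simp

lemma Li2R_one : Li2R 1 = Real.pi ^ 2 / 6 := by
  have h := hasSum_zeta_two
  rw [← hasSum_nat_add_iff' 1] at h
  simp only [Finset.range_one, Finset.sum_singleton, Nat.cast_zero] at h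
  norm_num at h
  unfold Li2R
  convert h.tsum_eq using 2 with n
  · rfl
  norm_num

lemma Li2R_continuousOn : ContinuousOn Li2R (Set.Icc (-1 : ℝ) 1) := by
  apply continuousOn_tsum (u := fun n : ℕ => 1 / ((n : ℝ) + 1) ^ 2)
  · intro n
    exact (continuous_pow _).continuousOn.div_const _
  · have h := (Real.summable_one_div_nat_pow (p := 2)).2 (by norm_num)
    have h2 := (summable_nat_add_iff 1).2 h
    refine h2.congr fun n => ?_
    push_cast
    ring
  · intro n x hx
    rw [Real.norm_eq_abs, abs_div, abs_pow]
    have h1 : |x| ≤ 1 := abs_le.2 ⟨hx.1, hx.2⟩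
    have h2 : (0:ℝ) < ((n : ℝ) + 1) ^ 2 := by positivity
    rw [abs_of_pos h2]
    gcongr
    exact pow_le_one₀ (abs_nonneg x) h1

lemma Li2R_hasDerivAt {x : ℝ} (hx : x ∈ Set.Ioo (0:ℝ) 1) :
    HasDerivAt Li2R (-Real.log (1 - x) / x) x := by
  obtain ⟨hx0, hx1⟩ := hx
  set r : ℝ := (1 + x) / 2 with hr
  have hr1 : r < 1 := by rw [hr]; linarith
  have hr0 : 0 < r := by rw [hr]; linarith
  have hxr : x < r := by rw [hr]; linarith
  have hsum : Summable (fun n : ℕ => r ^ n) := summable_geometric_of_lt_one hr0.le hr1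
  have key : HasDerivAt (fun y : ℝ => ∑' n : ℕ, y ^ (n+1) / ((n:ℝ)+1)^2)
      (∑' n : ℕ, x ^ n / ((n:ℝ)+1)) x := by
    refine hasDerivAt_tsum_of_isPreconnected hsum isOpen_Ioo
      (convex_Ioo (-r) r).isPreconnected
      (g := fun (n : ℕ) (y : ℝ) => y ^ (n+1) / ((n:ℝ)+1)^2)
      (g' := fun (n : ℕ) (y : ℝ) => y ^ n / ((n:ℝ)+1))
      (fun n y _ => ?_) (fun n y hy => ?_) (y₀ := 0) ⟨by linarith, hr0⟩ ?_
      ⟨by linarith, hxr⟩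
    · have h := (hasDerivAt_pow (n+1) y).div_const (((n:ℝ)+1)^2)
      convert h using 1
      · rfl
      have hn : ((n:ℝ)+1) ≠ 0 := by positivity
      push_cast
      field_simp
    · rw [Real.norm_eq_abs, abs_div, abs_pow]
      have hy' : |y| ≤ r := by
        rw [abs_le]; exact ⟨hy.1.le, hy.2.le⟩
      have hn : (0:ℝ) < (n:ℝ)+1 := by positivity
      rw [abs_of_pos hn]
      calc |y| ^ n / ((n:ℝ)+1) ≤ |y| ^ n :=
            div_le_self (pow_nonneg (abs_nonneg y) n)
              (by have := Nat.cast_nonneg (α := ℝ) n; linarith)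
        _ ≤ r ^ n := pow_le_pow_left₀ (abs_nonneg y) hy' n
    · apply summable_zero.congr
      intro n
      simp
  have habs : |x| < 1 := abs_lt.2 ⟨by linarith, hx1⟩
  have hlog := hasSum_pow_div_log_of_abs_lt_one habs
  have hne : x ≠ 0 := ne_of_gt hx0
  have hsum2 : HasSum (fun n : ℕ => x ^ n / ((n:ℝ)+1)) (-Real.log (1-x) / x) := by
    have h2 := hlog.mul_left x⁻¹
    have heq : ∀ n : ℕ, x⁻¹ * (x ^ (n+1) / ((n:ℝ)+1)) = x ^ n / ((n:ℝ)+1) := by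
      intro n
      rw [pow_succ]
      field_simp
    have hval : x⁻¹ * -Real.log (1-x) = -Real.log (1-x) / x := by
      rw [div_eq_inv_mul]
    rw [← hval]
    exact h2.congr_fun fun n => (heq n).symm
  have : Li2R = fun y : ℝ => ∑' n : ℕ, y ^ (n+1) / ((n:ℝ)+1)^2 := rfl
  rw [this, ← hsum2.tsum_eq]
  exact key

lemma log_mul_log_tendsto : Tendsto (fun t : ℝ => Real.log (1 - t) * Real.log t)
    (𝓝[>] (0:ℝ)) (𝓝 0) := by
  have hbase : Tendsto (fun t : ℝ => Real.log t * t) (𝓝[>] (0:ℝ)) (𝓝 0) := by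
    have h := tendsto_log_mul_rpow_nhdsGT_zero (r := 1) one_pos
    simpa [Real.rpow_one] using h
  have hbase2 : Tendsto (fun t : ℝ => 2 * |Real.log t * t|) (𝓝[>] (0:ℝ)) (𝓝 0) := by
    have := (hbase.abs).const_mul 2
    simpa using this
  refine squeeze_zero_norm' ?_ hbase2
  filter_upwards [Ioo_mem_nhdsGT (by norm_num : (0:ℝ) < 1/2)]
    with t ht
  obtain ⟨ht0, ht2⟩ := ht
  have h1t : (0:ℝ) < 1 - t := by linarith
  have hlog_neg : Real.log (1 - t) ≤ 0 := Real.log_nonpos (by linarith) (by linarith)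
  have hbound : |Real.log (1 - t)| ≤ 2 * t := by
    rw [abs_of_nonpos hlog_neg]
    have h := Real.log_le_sub_one_of_pos (show (0:ℝ) < (1-t)⁻¹ by positivity)
    rw [Real.log_inv] at h
    have h2 : (1-t)⁻¹ - 1 = t / (1-t) := by field_simp; ring
    rw [h2] at h
    have h3 : t / (1-t) ≤ 2 * t := by
      rw [div_le_iff₀ h1t]
      nlinarith
    linarith
  calc ‖Real.log (1 - t) * Real.log t‖ = |Real.log (1 - t)| * |Real.log t| := abs_mul _ _
    _ ≤ (2 * t) * |Real.log t| := by
        apply mul_le_mul_of_nonneg_right hbound (abs_nonneg _)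
    _ = 2 * |Real.log t * t| := by
        rw [abs_mul, abs_of_pos ht0]; ring

/-- Euler's reflection identity: for `z ∈ (0,1)`,
`Li₂(z) + Li₂(1−z) = π²/6 − log(z)·log(1−z)`. -/
theorem euler_reflection (z : ℝ) (hz : z ∈ Set.Ioo (0 : ℝ) 1) :
    Li2R z + Li2R (1 - z) = Real.pi ^ 2 / 6 - Real.log z * Real.log (1 - z) := by
  obtain ⟨hz0, hz1⟩ := hz
  set g : ℝ → ℝ := fun w => Li2R w + Li2R (1 - w) + Real.log w * Real.log (1 - w) with hg
  -- derivative of g is 0 on (0,1)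
  have hder : ∀ w ∈ Set.Ioo (0:ℝ) 1, HasDerivAt g 0 w := by
    intro w hw
    obtain ⟨hw0, hw1⟩ := hw
    have h1 : HasDerivAt Li2R (-Real.log (1 - w) / w) w := Li2R_hasDerivAt ⟨hw0, hw1⟩
    have h2' : HasDerivAt Li2R (-Real.log (1 - (1 - w)) / (1 - w)) (1 - w) :=
      Li2R_hasDerivAt ⟨by linarith, by linarith⟩
    have hsub : HasDerivAt (fun w : ℝ => 1 - w) (-1) w := by
      simpa using (hasDerivAt_id w).const_sub 1
    have h2 : HasDerivAt (fun w => Li2R (1 - w))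
        ((-Real.log (1 - (1 - w)) / (1 - w)) * (-1)) w := h2'.comp w hsub
    have h3 : HasDerivAt Real.log w⁻¹ w := Real.hasDerivAt_log (ne_of_gt hw0)
    have h4' : HasDerivAt Real.log (1 - w)⁻¹ (1 - w) :=
      Real.hasDerivAt_log (by linarith : (0:ℝ) < 1 - w).ne'
    have h4 : HasDerivAt (fun w => Real.log (1 - w)) ((1 - w)⁻¹ * (-1)) w :=
      h4'.comp w hsub
    have h5 : HasDerivAt (fun w => Real.log w * Real.log (1 - w))
        (w⁻¹ * Real.log (1 - w) + Real.log w * ((1 - w)⁻¹ * (-1))) w := h3.mul h4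
    have := (h1.add h2).add h5
    convert this using 1
    · rfl
    · rfl
    · rfl
    have hsimp : 1 - (1 - w) = w := by ring
    rw [hsimp]
    field_simp
    ring
  -- g is constant on (0,1)
  have hconst : ∀ w ∈ Set.Ioo (0:ℝ) 1, g w = g z := by
    intro w hw
    refine (convex_Ioo (0:ℝ) 1).is_const_of_fderivWithin_eq_zero (𝕜 := ℝ)
      (fun y hy => ((hder y hy).differentiableAt).differentiableWithinAt)
      (fun y hy => ?_) hw ⟨hz0, hz1⟩
    have hF := (hder y hy).hasFDerivAt
    rw [(hder y hy).differentiableAt.fderivWithin (isOpen_Ioo.uniqueDiffWithinAt hy),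
      hF.fderiv]
    ext
    simp
  -- the limit of g at 1⁻ along (0,1)
  have hne : (𝓝[Set.Ioo (0:ℝ) 1] (1:ℝ)).NeBot := by
    rw [← mem_closure_iff_nhdsWithin_neBot, closure_Ioo (by norm_num : (0:ℝ) ≠ 1)]
    exact ⟨by norm_num, le_refl 1⟩
  have hmemIcc : ∀ w ∈ Set.Ioo (0:ℝ) 1, w ∈ Set.Icc (-1:ℝ) 1 :=
    fun w hw => ⟨by linarith [hw.1], hw.2.le⟩
  have t1 : Tendsto Li2R (𝓝[Set.Ioo (0:ℝ) 1] 1) (𝓝 (Real.pi ^ 2 / 6)) := by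
    have hc : ContinuousWithinAt Li2R (Set.Icc (-1:ℝ) 1) 1 :=
      Li2R_continuousOn 1 ⟨by norm_num, le_refl 1⟩
    rw [← Li2R_one]
    exact hc.tendsto.mono_left (nhdsWithin_mono 1 (fun w hw => hmemIcc w hw))
  have hmap : Tendsto (fun w : ℝ => 1 - w) (𝓝[Set.Ioo (0:ℝ) 1] 1)
      (𝓝[Set.Ioo (0:ℝ) 1] 0) := by
    rw [tendsto_nhdsWithin_iff]
    constructor
    · have hc2 : Tendsto (fun w : ℝ => 1 - w) (𝓝 1) (𝓝 0) := by
        have h := ((continuous_sub_left (1:ℝ))).tendsto (1:ℝ)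
        simpa using h
      exact hc2.mono_left nhdsWithin_le_nhds
    · filter_upwards [self_mem_nhdsWithin] with w hw
      exact ⟨by linarith [hw.2], by linarith [hw.1]⟩
  have t2 : Tendsto (fun w => Li2R (1 - w)) (𝓝[Set.Ioo (0:ℝ) 1] 1) (𝓝 0) := by
    have hc : ContinuousWithinAt Li2R (Set.Icc (-1:ℝ) 1) 0 :=
      Li2R_continuousOn 0 ⟨by norm_num, by norm_num⟩
    have := hc.tendsto.comp
      (hmap.mono_right (nhdsWithin_mono 0 (fun w hw => hmemIcc w hw)))
    rw [Li2R_zero] at this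
    exact this
  have t3 : Tendsto (fun w => Real.log w * Real.log (1 - w))
      (𝓝[Set.Ioo (0:ℝ) 1] 1) (𝓝 0) := by
    have hmap2 : Tendsto (fun w : ℝ => 1 - w) (𝓝[Set.Ioo (0:ℝ) 1] 1) (𝓝[>] (0:ℝ)) :=
      hmap.mono_right (nhdsWithin_mono 0 (fun w hw => hw.1))
    have := log_mul_log_tendsto.comp hmap2
    refine this.congr fun w => ?_
    simp only [Function.comp]
    rw [show (1:ℝ) - (1 - w) = w by ring]
  have hglim : Tendsto g (𝓝[Set.Ioo (0:ℝ) 1] 1) (𝓝 (Real.pi ^ 2 / 6)) := by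
    have := (t1.add t2).add t3
    simpa using this
  have hgconst : Tendsto g (𝓝[Set.Ioo (0:ℝ) 1] 1) (𝓝 (g z)) := by
    refine tendsto_const_nhds.congr' ?_
    filter_upwards [self_mem_nhdsWithin] with w hw
    exact (hconst w hw).symm
  have hfinal : g z = Real.pi ^ 2 / 6 := tendsto_nhds_unique hgconst hglim
  have : Li2R z + Li2R (1 - z) + Real.log z * Real.log (1 - z) = Real.pi ^ 2 / 6 := hfinal
  linarith
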